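/- The effective affinity dominates the steady-state edge force in modulus (Theorem 'bigger'): Assume in addition that the kernel of W (as a linear map v ↦ W *ᵥ v) is one-dimensional and that the kernel of W_hid is one-dimensional, and let r : Fin n → ℝ be strictly positive with ∑ i, r i = 1 and W *ᵥ r = 0 (the steady state of the full dynamics). Then |Q| ≥ |F|, where F := Real.log (W a b * r b / (W b a * r a)) is the steady-state force along the observable edge and Q := Real.log (W a b * p b / (W b a * p a)) is the effective affinity. -/

import Mathlib

open Matrix

/-- Maximum principle: for a matrix `A` with nonnegative off-diagonal entries, zero
row sums and zero column sums, whose kernel consists of constant vectors only,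
if `A *ᵥ u` vanishes away from `a, b` and is positive at `b`, then `u b ≤ u a`. -/
lemma max_principle_aux {n : ℕ} (A : Matrix (Fin n) (Fin n) ℝ)
    (hoff : ∀ i j, i ≠ j → 0 ≤ A i j)
    (hrow : ∀ i, ∑ j, A i j = 0)
    (hcol : ∀ j, ∑ i, A i j = 0)
    (hconst : ∀ v : Fin n → ℝ, A *ᵥ v = 0 → ∀ i j, v i = v j)
    (a b : Fin n) (u : Fin n → ℝ)
    (hub : 0 < (A *ᵥ u) b)
    (hother : ∀ i, i ≠ a → i ≠ b → (A *ᵥ u) i = 0) :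
    u b ≤ u a := by
  classical
  by_contra hcon
  push_neg at hcon
  have hne : (Finset.univ : Finset (Fin n)).Nonempty := ⟨b, Finset.mem_univ b⟩
  set m := Finset.univ.sup' hne u with hm
  have hle : ∀ i, u i ≤ m := fun i => Finset.le_sup' u (Finset.mem_univ i)
  obtain ⟨i0, _, hi0⟩ := Finset.exists_mem_eq_sup' hne u
  set S : Finset (Fin n) := Finset.univ.filter (fun i => u i = m) with hSdef
  have hmemS : ∀ i, i ∈ S ↔ u i = m := by intro i; simp [hSdef]
  have hsum_shift : ∀ i, ∑ j, A i j * (u j - u i) = (A *ᵥ u) i := by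
    intro i
    have : ∑ j, A i j * (u j - u i)
        = (∑ j, A i j * u j) - (∑ j, A i j) * u i := by
      rw [Finset.sum_mul]
      rw [← Finset.sum_sub_distrib]
      congr 1; ext j; ring
    rw [this, hrow i]
    simp [mulVec, dotProduct]
  have hbS : b ∉ S := by
    intro hb
    have hub' : u b = m := (hmemS b).1 hb
    have h2 : ∑ j, A b j * (u j - u b) ≤ 0 := by
      apply Finset.sum_nonpos
      intro j _
      rcases eq_or_ne j b with rfl | hj
      · simp
      · exact mul_nonpos_of_nonneg_of_nonpos (hoff b j (Ne.symm hj))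
          (by rw [hub']; linarith [hle j])
    rw [hsum_shift b] at h2
    linarith
  have haS : a ∉ S := by
    intro ha
    have h1 := (hmemS a).1 ha
    have h2 := hle b
    linarith
  -- S is closed: no rate from S to outside S
  have hclosed : ∀ i ∈ S, ∀ j, j ∉ S → A i j = 0 := by
    intro i hi j hj
    have hia : i ≠ a := fun h => haS (h ▸ hi)
    have hib : i ≠ b := fun h => hbS (h ▸ hi)
    have hui : u i = m := (hmemS i).1 hi
    have h0 : ∑ j, A i j * (u j - u i) = 0 := by
      rw [hsum_shift i, hother i hia hib]
    have hnonpos : ∀ k ∈ Finset.univ, A i k * (u k - u i) ≤ 0 := by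
      intro k _
      rcases eq_or_ne k i with rfl | hk
      · simp
      · exact mul_nonpos_of_nonneg_of_nonpos (hoff i k (Ne.symm hk))
          (by rw [hui]; linarith [hle k])
    have hz := (Finset.sum_eq_zero_iff_of_nonpos hnonpos).1 h0 j (Finset.mem_univ j)
    have huj : u j < m := lt_of_le_of_ne (hle j) (fun h => hj ((hmemS j).2 h))
    have : u j - u i ≠ 0 := by rw [hui]; intro h; linarith
    rcases mul_eq_zero.1 hz with h | h
    · exact h
    · exact absurd h this
  -- rows of A within S sum to zero
  have hrowS : ∀ i ∈ S, ∑ j ∈ S, A i j = 0 := by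
    intro i hi
    rw [Finset.sum_subset (Finset.subset_univ S)
      (fun j _ hj => hclosed i hi j hj)]
    exact hrow i
  -- also no rate from outside S into S (uses column sums)
  have hanti : ∀ i ∉ S, ∀ j ∈ S, A i j = 0 := by
    have hT : ∑ j ∈ S, ∑ i ∈ Sᶜ, A i j = 0 := by
      have h1 : ∀ j ∈ S, ∑ i ∈ S, A i j + ∑ i ∈ Sᶜ, A i j = 0 := by
        intro j _
        rw [Finset.sum_add_sum_compl]
        exact hcol j
      have h2 : ∑ j ∈ S, ∑ i ∈ S, A i j = 0 := by
        rw [Finset.sum_comm]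
        exact Finset.sum_eq_zero hrowS
      have h3 : ∑ j ∈ S, (∑ i ∈ S, A i j + ∑ i ∈ Sᶜ, A i j) = 0 :=
        Finset.sum_eq_zero h1
      rw [Finset.sum_add_distrib, h2, zero_add] at h3
      exact h3
    intro i hi j hj
    have hnn : ∀ j' ∈ S, 0 ≤ ∑ i' ∈ Sᶜ, A i' j' := by
      intro j' hj'
      apply Finset.sum_nonneg
      intro i' hi'
      have : i' ≠ j' := fun h => (Finset.mem_compl.1 hi') (h ▸ hj')
      exact hoff i' j' this
    have hz := (Finset.sum_eq_zero_iff_of_nonneg hnn).1 hT j hj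
    have hnn2 : ∀ i' ∈ Sᶜ, 0 ≤ A i' j := by
      intro i' hi'
      have : i' ≠ j := fun h => (Finset.mem_compl.1 hi') (h ▸ hj)
      exact hoff i' j this
    exact (Finset.sum_eq_zero_iff_of_nonneg hnn2).1 hz i (Finset.mem_compl.2 hi)
  -- the indicator of S is in the kernel of A
  set v1 : Fin n → ℝ := fun i => if i ∈ S then 1 else 0 with hv1
  have hker : A *ᵥ v1 = 0 := by
    funext i
    have : (A *ᵥ v1) i = ∑ j ∈ S, A i j := by
      simp only [mulVec, dotProduct, hv1, mul_ite, mul_one, mul_zero]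
      rw [Finset.sum_ite_mem, Finset.univ_inter]
    rw [Pi.zero_apply, this]
    by_cases hi : i ∈ S
    · exact hrowS i hi
    · exact Finset.sum_eq_zero (fun j hj => hanti i hi j hj)
  have := hconst v1 hker i0 a
  have hi0S : i0 ∈ S := (hmemS i0).2 hi0.symm
  rw [hv1] at this
  simp only [hi0S, if_pos, haS, if_neg] at this
  exact one_ne_zero this

/-- The effective affinity dominates the steady-state edge force in modulus
(Theorem "bigger"). -/
theorem effective_affinity_bigger {n : ℕ} (hn : 3 ≤ n)
    (W Whid : Matrix (Fin n) (Fin n) ℝ)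
    (hW1 : ∀ i j, i ≠ j → 0 ≤ W i j)
    (hW2 : ∀ j, ∑ i, W i j = 0)
    (a b : Fin n) (hab : a ≠ b)
    (hWab : 0 < W a b) (hWba : 0 < W b a)
    (hH1 : Whid a b = 0) (hH2 : Whid b a = 0)
    (hH3 : Whid a a = W a a + W b a)
    (hH4 : Whid b b = W b b + W a b)
    (hH5 : ∀ i j, ¬(i = a ∧ j = b) → ¬(i = b ∧ j = a) → ¬(i = a ∧ j = a) →
      ¬(i = b ∧ j = b) → Whid i j = W i j)
    (p : Fin n → ℝ) (hp1 : ∀ i, 0 < p i) (hp2 : ∑ i, p i = 1)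
    (hp3 : Whid *ᵥ p = 0)
    (hkerW : Module.finrank ℝ (LinearMap.ker W.mulVecLin) = 1)
    (hkerH : Module.finrank ℝ (LinearMap.ker Whid.mulVecLin) = 1)
    (r : Fin n → ℝ) (hr1 : ∀ i, 0 < r i) (hr2 : ∑ i, r i = 1) (hr3 : W *ᵥ r = 0) :
    |Real.log (W a b * r b / (W b a * r a))|
      ≤ |Real.log (W a b * p b / (W b a * p a))| := by
  classical
  -- off-diagonal entries of Whid are nonnegative
  have hHoff : ∀ i j, i ≠ j → 0 ≤ Whid i j := by
    intro i j hij
    by_cases h1 : i = a ∧ j = b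
    · rw [h1.1, h1.2, hH1]
    by_cases h2 : i = b ∧ j = a
    · rw [h2.1, h2.2, hH2]
    have h3 : ¬(i = a ∧ j = a) := fun h => hij (h.1.trans h.2.symm)
    have h4 : ¬(i = b ∧ j = b) := fun h => hij (h.1.trans h.2.symm)
    rw [hH5 i j h1 h2 h3 h4]
    exact hW1 i j hij
  -- column decomposition of Whid
  have hcolA : ∀ i, Whid i a = W i a + (if i = a then W b a else 0)
      - (if i = b then W b a else 0) := by
    intro i
    by_cases hia : i = a
    · rw [hia, hH3]; simp [hab, Ne.symm hab]
    by_cases hib : i = b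
    · rw [hib, hH2]; simp [hab, Ne.symm hab]
    · rw [hH5 i a (fun h => hab h.2) (fun h => hib h.1) (fun h => hia h.1)
        (fun h => hab h.2)]; simp [hia, hib]
  have hcolB : ∀ i, Whid i b = W i b + (if i = b then W a b else 0)
      - (if i = a then W a b else 0) := by
    intro i
    by_cases hib : i = b
    · rw [hib, hH4]; simp [hab, Ne.symm hab]
    by_cases hia : i = a
    · rw [hia, hH1]; simp [hab, Ne.symm hab]
    · rw [hH5 i b (fun h => hia h.1) (fun h => hab h.2.symm) (fun h => hab h.2.symm)
        (fun h => hib h.1)]; simp [hia, hib]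
  -- Whid has zero column sums
  have hHcol : ∀ j, ∑ i, Whid i j = 0 := by
    intro j
    by_cases hja : j = a
    · rw [hja]
      calc ∑ i, Whid i a = ∑ i, (W i a + (if i = a then W b a else 0)
          - (if i = b then W b a else 0)) := Finset.sum_congr rfl (fun i _ => hcolA i)
      _ = 0 := by
          rw [Finset.sum_sub_distrib, Finset.sum_add_distrib, hW2]
          simp
    by_cases hjb : j = b
    · rw [hjb]
      calc ∑ i, Whid i b = ∑ i, (W i b + (if i = b then W a b else 0)
          - (if i = a then W a b else 0)) := Finset.sum_congr rfl (fun i _ => hcolB i)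
      _ = 0 := by
          rw [Finset.sum_sub_distrib, Finset.sum_add_distrib, hW2]
          simp
    · have heq : ∀ i, Whid i j = W i j := by
        intro i
        exact hH5 i j (fun h => hjb h.2) (fun h => hja h.2) (fun h => hja h.2)
          (fun h => hjb h.2)
      rw [Finset.sum_congr rfl (fun i _ => heq i), hW2]
  -- every kernel vector of Whid is a multiple of p
  have hkermul : ∀ v : Fin n → ℝ, Whid *ᵥ v = 0 → ∃ t : ℝ, ∀ i, v i = t * p i := by
    intro v hv
    rw [finrank_eq_one_iff'] at hkerH
    obtain ⟨v₀, hv₀ne, hgen⟩ := hkerH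
    have hpK : p ∈ LinearMap.ker Whid.mulVecLin := by
      rw [LinearMap.mem_ker, mulVecLin_apply]; exact hp3
    have hvK : v ∈ LinearMap.ker Whid.mulVecLin := by
      rw [LinearMap.mem_ker, mulVecLin_apply]; exact hv
    obtain ⟨s, hs⟩ := hgen ⟨p, hpK⟩
    obtain ⟨c, hc⟩ := hgen ⟨v, hvK⟩
    have hs' : s • (v₀ : Fin n → ℝ) = p := congrArg Subtype.val hs
    have hc' : c • (v₀ : Fin n → ℝ) = v := congrArg Subtype.val hc
    have hs0 : s ≠ 0 := by
      intro h
      rw [h, zero_smul] at hs'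
      have := hp1 ⟨0, by omega⟩
      rw [← hs'] at this
      simp at this
    refine ⟨c / s, fun i => ?_⟩
    have h1 : (v₀ : Fin n → ℝ) i = p i / s := by
      rw [← hs']; simp [hs0]
    rw [← hc']
    simp [h1]
    field_simp
  -- the auxiliary matrix A i j = Whid i j * p j
  set A : Matrix (Fin n) (Fin n) ℝ := Matrix.of (fun i j => Whid i j * p j) with hA
  have hAapp : ∀ i j, A i j = Whid i j * p j := fun i j => rfl
  have hAoff : ∀ i j, i ≠ j → 0 ≤ A i j :=
    fun i j hij => mul_nonneg (hHoff i j hij) (hp1 j).le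
  have hArow : ∀ i, ∑ j, A i j = 0 := by
    intro i
    have := congrFun hp3 i
    simpa [mulVec, dotProduct, hAapp] using this
  have hAcol : ∀ j, ∑ i, A i j = 0 := by
    intro j
    simp only [hAapp]
    rw [← Finset.sum_mul, hHcol j, zero_mul]
  have hAconst : ∀ v : Fin n → ℝ, A *ᵥ v = 0 → ∀ i j, v i = v j := by
    intro v hv i j
    have hWv : Whid *ᵥ (fun k => p k * v k) = 0 := by
      funext i'
      have := congrFun hv i'
      simp only [mulVec, dotProduct, hAapp, Pi.zero_apply] at this ⊢
      rw [← this]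
      congr 1; ext k; ring
    obtain ⟨t, ht⟩ := hkermul _ hWv
    have key : ∀ k, v k = t := by
      intro k
      have h := ht k
      have hpk := (hp1 k).ne'
      apply mul_left_cancel₀ hpk
      rw [h]; ring
    rw [key i, key j]
  -- compute (A *ᵥ u) = Whid *ᵥ r for u = r / p
  set u : Fin n → ℝ := fun i => r i / p i with hu
  have hAu : ∀ i, (A *ᵥ u) i = (Whid *ᵥ r) i := by
    intro i
    simp only [mulVec, dotProduct, hAapp, hu]
    apply Finset.sum_congr rfl
    intro j _
    have hpj := (hp1 j).ne'
    field_simp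
  set c : ℝ := W a b * r b - W b a * r a with hc
  -- values of Whid *ᵥ r
  have hWr : ∀ i, (W *ᵥ r) i = 0 := fun i => congrFun hr3 i
  have hHr_a : (Whid *ᵥ r) a = -c := by
    have hrowa : ∀ j, Whid a j = W a j + (if j = a then W b a else 0)
        + (if j = b then -(W a b) else 0) := by
      intro j
      by_cases hja : j = a
      · rw [hja, hH3]; simp [hab, Ne.symm hab]
      by_cases hjb : j = b
      · rw [hjb, hH1]; simp [hab, Ne.symm hab]
      · rw [hH5 a j (fun h => hjb h.2) (fun h => hab h.1)
          (fun h => hja h.2) (fun h => hab h.1)]; simp [hja, hjb]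
    simp only [mulVec, dotProduct]
    calc ∑ j, Whid a j * r j
        = ∑ j, (W a j * r j + (if j = a then W b a * r j else 0)
            + (if j = b then -(W a b) * r j else 0)) := by
          apply Finset.sum_congr rfl
          intro j _
          rw [hrowa j]
          by_cases hja : j = a <;> by_cases hjb : j = b <;> simp [hja, hjb, hab, Ne.symm hab] <;> ring
      _ = -c := by
          rw [Finset.sum_add_distrib, Finset.sum_add_distrib]
          have h1 : ∑ j, W a j * r j = 0 := by
            have := hWr a; simpa [mulVec, dotProduct] using this
          rw [h1]
          simp [hc]
          ring
  have hHr_b : (Whid *ᵥ r) b = c := by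
    have hrowb : ∀ j, Whid b j = W b j + (if j = b then W a b else 0)
        + (if j = a then -(W b a) else 0) := by
      intro j
      by_cases hjb : j = b
      · rw [hjb, hH4]; simp [hab, Ne.symm hab]
      by_cases hja : j = a
      · rw [hja, hH2]; simp [hab, Ne.symm hab]
      · rw [hH5 b j (fun h => hab h.1.symm) (fun h => hja h.2)
          (fun h => hab h.1.symm) (fun h => hjb h.2)]
        simp [hja, hjb]
    simp only [mulVec, dotProduct]
    calc ∑ j, Whid b j * r j
        = ∑ j, (W b j * r j + (if j = b then W a b * r j else 0)
            + (if j = a then -(W b a) * r j else 0)) := by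
          apply Finset.sum_congr rfl
          intro j _
          rw [hrowb j]
          by_cases hja : j = a <;> by_cases hjb : j = b <;> simp [hja, hjb, hab, Ne.symm hab] <;> ring
      _ = c := by
          rw [Finset.sum_add_distrib, Finset.sum_add_distrib]
          have h1 : ∑ j, W b j * r j = 0 := by
            have := hWr b; simpa [mulVec, dotProduct] using this
          rw [h1]
          simp [hc]
          ring
  have hHr_o : ∀ i, i ≠ a → i ≠ b → (Whid *ᵥ r) i = 0 := by
    intro i hia hib
    have heq : ∀ j, Whid i j = W i j := by
      intro j
      exact hH5 i j (fun h => hia h.1) (fun h => hib h.1) (fun h => hia h.1)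
        (fun h => hib h.1)
    simp only [mulVec, dotProduct]
    rw [Finset.sum_congr rfl (fun j _ => by rw [heq j])]
    have := hWr i; simpa [mulVec, dotProduct] using this
  -- positivity facts
  have hpa := hp1 a; have hpb := hp1 b
  have hra := hr1 a; have hrb := hr1 b
  have hposr : 0 < W a b * r b / (W b a * r a) :=
    div_pos (mul_pos hWab hrb) (mul_pos hWba hra)
  have hposp : 0 < W a b * p b / (W b a * p a) :=
    div_pos (mul_pos hWab hpb) (mul_pos hWba hpa)
  rcases lt_trichotomy c 0 with hclt | hceq | hcgt
  · -- c < 0 : F ≤ 0 and Q ≤ F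
    have hmp : u a ≤ u b := by
      apply max_principle_aux A hAoff hArow hAcol hAconst b a u
      · rw [hAu a, hHr_a]; linarith
      · intro i hib hia
        rw [hAu i, hHr_o i hia hib]
    have hineq : r a * p b ≤ r b * p a := by
      rw [hu] at hmp
      rw [div_le_div_iff₀ (hp1 a) (hp1 b)] at hmp
      linarith
    have hF : Real.log (W a b * r b / (W b a * r a)) ≤ 0 := by
      apply Real.log_nonpos hposr.le
      rw [div_le_one (mul_pos hWba hra)]
      linarith
    have hQF : Real.log (W a b * p b / (W b a * p a))
        ≤ Real.log (W a b * r b / (W b a * r a)) := by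
      apply Real.log_le_log hposp
      rw [div_le_div_iff₀ (mul_pos hWba hpa) (mul_pos hWba hra)]
      nlinarith [mul_pos hWab hWba]
    rw [abs_of_nonpos hF]
    calc -Real.log (W a b * r b / (W b a * r a))
        ≤ -Real.log (W a b * p b / (W b a * p a)) := by linarith
      _ ≤ |Real.log (W a b * p b / (W b a * p a))| := neg_le_abs _
  · -- c = 0 : F = 0
    have : W a b * r b / (W b a * r a) = 1 := by
      rw [div_eq_one_iff_eq (mul_pos hWba hra).ne']
      linarith
    rw [this, Real.log_one, abs_zero]
    exact abs_nonneg _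
  · -- c > 0 : 0 ≤ F and F ≤ Q
    have hmp : u b ≤ u a := by
      apply max_principle_aux A hAoff hArow hAcol hAconst a b u
      · rw [hAu b, hHr_b]; linarith
      · intro i hia hib
        rw [hAu i, hHr_o i hia hib]
    have hineq : r b * p a ≤ r a * p b := by
      rw [hu] at hmp
      rw [div_le_div_iff₀ (hp1 b) (hp1 a)] at hmp
      linarith
    have hF : 0 ≤ Real.log (W a b * r b / (W b a * r a)) := by
      apply Real.log_nonneg
      rw [le_div_iff₀ (mul_pos hWba hra)]
      linarith
    have hFQ : Real.log (W a b * r b / (W b a * r a))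
        ≤ Real.log (W a b * p b / (W b a * p a)) := by
      apply Real.log_le_log hposr
      rw [div_le_div_iff₀ (mul_pos hWba hra) (mul_pos hWba hpa)]
      nlinarith [mul_pos hWab hWba]
    rw [abs_of_nonneg hF]
    calc Real.log (W a b * r b / (W b a * r a))
        ≤ Real.log (W a b * p b / (W b a * p a)) := hFQ
      _ ≤ |Real.log (W a b * p b / (W b a * p a))| := le_abs_self _
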